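/- Let R be a Prüfer domain with quotient field K, let M be a finitely generated torsion-free R-module, and let U be a K-subspace of V := M ⊗_R K. Then U ∩ M is a finitely generated R-module. -/

import Mathlib

open nonZeroDivisors

/-- A Prüfer domain: every nonzero finitely generated ideal is invertible
(as a fractional ideal in the fraction field). -/
def IsPruferDomain (R : Type*) [CommRing R] [IsDomain R] : Prop :=
  ∀ I : Ideal R, I.FG → I ≠ ⊥ →
    IsUnit (I : FractionalIdeal R⁰ (FractionRing R))

section Aux

open Submodule FractionalIdeal Pointwise

variable {R : Type*} [CommRing R] [IsDomain R]
variable {K : Type*} [Field K] [Algebra R K] [IsFractionRing R K]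

/-- Every nonzero finitely generated fractional ideal of a Prüfer domain is invertible. -/
theorem prufer_isUnit_of_fg (hR : IsPruferDomain R) (I : FractionalIdeal R⁰ K)
    (hfg : (I : Submodule R K).FG) (hne : I ≠ 0) : IsUnit I := by
  obtain ⟨a, aI, ha, haI⟩ := I.exists_eq_spanSingleton_mul
  have ha' : algebraMap R K a ≠ 0 := fun h => ha (IsFractionRing.to_map_eq_zero_iff.mp h)
  have haI2 : (aI : FractionalIdeal R⁰ K) = spanSingleton R⁰ (algebraMap R K a) * I := by
    rw [haI, ← mul_assoc, spanSingleton_mul_spanSingleton, mul_inv_cancel₀ ha',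
      spanSingleton_one, one_mul]
  have hfg2 : aI.FG := by
    rw [← coeIdeal_fg R⁰ (IsFractionRing.injective R K) aI]
    rw [haI2, coe_mul, coe_spanSingleton]
    exact Submodule.FG.mul (Submodule.fg_span_singleton _) hfg
  have hbot : aI ≠ ⊥ := by
    rintro rfl
    apply hne
    rw [haI]
    simp
  have hu' := hR aI hfg2 hbot
  have hu2 : IsUnit (aI : FractionalIdeal R⁰ K) := by
    have := hu'.map (FractionalIdeal.canonicalEquiv R⁰ (FractionRing R) K)
    rwa [canonicalEquiv_coeIdeal] at this
  have hspan : IsUnit (spanSingleton R⁰ (algebraMap R K a)⁻¹) := by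
    refine IsUnit.of_mul_eq_one (spanSingleton R⁰ (algebraMap R K a)) ?_
    rw [spanSingleton_mul_spanSingleton, inv_mul_cancel₀ ha', spanSingleton_one]
  rw [haI]
  exact hspan.mul hu2

/-- An invertible `R`-submodule of `K` is a projective `R`-module. -/
theorem projective_of_isUnit_submodule {J : Submodule R K} (h : IsUnit J) :
    Module.Projective R ↥J := by
  obtain ⟨u, hu⟩ := h
  set J' : Submodule R K := ↑u⁻¹ with hJ'
  have hJJ' : J * J' = 1 := by
    rw [← hu, hJ']; exact u.mul_inv
  have h1 : (1 : K) ∈ J * J' := by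
    rw [hJJ']; exact Submodule.one_le.mp le_rfl
  rw [Submodule.mul_eq_span_mul_set] at h1
  obtain ⟨c, hsupp, hsum⟩ := mem_span_set.mp h1
  set ι := {x : K // x ∈ c.support} with hι
  have hmem : ∀ i : ι, (i : K) ∈ ((J : Set K) * (J' : Set K)) :=
    fun i => hsupp i.2
  choose a ha b hb hab using fun i => Set.mem_mul.mp (hmem i)
  have hbx : ∀ (i : ι) (x : ↥J), b i * (x : K) ∈ (1 : Submodule R K) := by
    intro i x
    rw [← hJJ', mul_comm J J']
    exact Submodule.mul_mem_mul (hb i) x.2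
  have inj : Function.Injective (Algebra.linearMap R K) := IsFractionRing.injective R K
  set e : R ≃ₗ[R] LinearMap.range (Algebra.linearMap R K) :=
    LinearEquiv.ofInjective _ inj with he
  set ψ : ι → (↥J →ₗ[R] R) := fun i =>
    e.symm.toLinearMap ∘ₗ LinearMap.codRestrict (LinearMap.range (Algebra.linearMap R K))
      ((LinearMap.mulLeft R (b i)) ∘ₗ J.subtype)
      (fun x => by rw [← Submodule.one_eq_range]; exact hbx i x) with hψdef
  have hψ : ∀ (i : ι) (x : ↥J), algebraMap R K (ψ i x) = b i * (x : K) := by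
    intro i x
    have h1 : (e (ψ i x) : K) = algebraMap R K (ψ i x) := by
      simp [he, LinearEquiv.ofInjective_apply]
    rw [← h1, hψdef]
    simp
  set s : ↥J →ₗ[R] (ι → R) := LinearMap.pi fun i => (c i) • ψ i with hs
  set t : (ι → R) →ₗ[R] ↥J :=
    ∑ i : ι, (LinearMap.toSpanSingleton R ↥J ⟨a i, ha i⟩) ∘ₗ LinearMap.proj i with ht
  have key : t.comp s = LinearMap.id := by
    ext x
    have : ((t (s x) : ↥J) : K) = ∑ i : ι, (c i * ψ i x) • a i := by
      rw [ht, hs]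
      simp [LinearMap.sum_apply, AddSubmonoidClass.coe_finset_sum, smul_eq_mul]
    rw [LinearMap.comp_apply, LinearMap.id_apply, this]
    have step : ∀ i : ι, (c i * ψ i x) • a i = (c i • (i : K)) * (x : K) := by
      intro i
      rw [mul_smul, Algebra.smul_def (ψ i x), hψ, ← hab i, smul_mul_assoc]
      ring_nf
    rw [Finset.sum_congr rfl fun i _ => step i, ← Finset.sum_mul]
    have : ∑ i : ι, c i • (i : K) = 1 := by
      rw [← hsum, Finsupp.sum, Finset.sum_coe_sort c.support fun p => c p • p]
    rw [this, one_mul]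
  exact Module.Projective.of_split s t key

end Aux

/-- Key lemma: a finitely generated `R`-submodule of a `K`-vector space,
`R` a Prüfer domain with fraction field `K`, is projective. -/
theorem prufer_projective_of_fg {R : Type*} [CommRing R] [IsDomain R] (hR : IsPruferDomain R)
    {K : Type*} [Field K] [Algebra R K] [IsFractionRing R K]
    {V : Type*} [AddCommGroup V] [Module K V] [Module R V] [IsScalarTower R K V] :
    ∀ (n : ℕ) (N : Submodule R V), N.FG →
      Module.finrank K (Submodule.span K (N : Set V)) ≤ n → Module.Projective R ↥N := by
  intro n
  induction n with
  | zero =>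
    intro N hfg hrank
    have hfd : FiniteDimensional K (Submodule.span K (N : Set V)) := by
      obtain ⟨S, hS⟩ := hfg
      rw [← hS, Submodule.span_span_of_tower]
      exact FiniteDimensional.span_of_finite K S.finite_toSet
    have hspan : Submodule.span K (N : Set V) = ⊥ :=
      Submodule.finrank_eq_zero.mp (Nat.le_zero.mp hrank)
    have : N = ⊥ := by
      rw [eq_bot_iff]
      intro x hx
      have : x ∈ Submodule.span K (N : Set V) := Submodule.subset_span hx
      rw [hspan] at this
      simpa using this
    subst this
    exact Module.Projective.of_basis (Module.Basis.empty (ι := Fin 0) _)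
  | succ n ih =>
    intro N hfg hrank
    have hfd : FiniteDimensional K (Submodule.span K (N : Set V)) := by
      obtain ⟨S, hS⟩ := hfg
      rw [← hS, Submodule.span_span_of_tower]
      exact FiniteDimensional.span_of_finite K S.finite_toSet
    by_cases hN : N = ⊥
    · subst hN
      exact Module.Projective.of_basis (Module.Basis.empty (ι := Fin 0) _)
    · obtain ⟨v, hv, hv0⟩ := Submodule.ne_bot_iff N |>.mp hN
      -- get a K-linear functional nonzero at v
      obtain ⟨C, hC⟩ := Submodule.exists_isCompl (Submodule.span K {v})
      let f : V →ₗ[K] K :=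
        (LinearEquiv.toSpanNonzeroSingleton K V v hv0).symm.toLinearMap ∘ₗ
          Submodule.linearProjOfIsCompl _ C hC
      have hfv : f v = 1 := by
        have : Submodule.linearProjOfIsCompl _ C hC v =
            ⟨v, Submodule.mem_span_singleton_self v⟩ :=
          Submodule.linearProjOfIsCompl_apply_left hC ⟨v, Submodule.mem_span_singleton_self v⟩
        simp only [f, LinearMap.comp_apply, this]
        have : (LinearEquiv.toSpanNonzeroSingleton K V v hv0) 1 =
            ⟨v, Submodule.mem_span_singleton_self v⟩ := by
          apply Subtype.ext
          simp [LinearEquiv.toSpanNonzeroSingleton]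
        rw [← this, LinearEquiv.coe_toLinearMap, LinearEquiv.symm_apply_apply]
      set fR : V →ₗ[R] K := f.restrictScalars R with hfR
      set J : Submodule R K := Submodule.map fR N with hJ
      have hJfg : J.FG := hfg.map fR
      have hJne : J ≠ ⊥ := by
        intro h
        have : fR v ∈ J := Submodule.mem_map_of_mem hv
        rw [h] at this
        simp only [Submodule.mem_bot] at this
        rw [hfR] at this
        simp only [LinearMap.coe_restrictScalars] at this
        rw [hfv] at this
        exact one_ne_zero this
      -- J is an invertible fractional ideal
      set I : FractionalIdeal R⁰ K := ⟨J, FractionalIdeal.isFractional_of_fg hJfg⟩ with hI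
      have hIJ : (I : Submodule R K) = J := rfl
      have hIne : I ≠ 0 := by
        intro h
        apply hJne
        rw [← hIJ, h]
        exact FractionalIdeal.coe_zero
      have hIu : IsUnit I := prufer_isUnit_of_fg hR I (hIJ ▸ hJfg) hIne
      have hJu : IsUnit J := by
        have := hIu.map (FractionalIdeal.coeSubmoduleHom R⁰ K)
        exact this
      have hJproj : Module.Projective R ↥J := projective_of_isUnit_submodule hJu
      -- split off J
      have hmemJ : ∀ x : ↥N, fR ↑x ∈ J := fun x => Submodule.mem_map_of_mem x.2
      set q : ↥N →ₗ[R] ↥J := LinearMap.codRestrict J (fR ∘ₗ N.subtype) fun x => hmemJ x with hq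
      have hqsurj : Function.Surjective q := by
        intro y
        obtain ⟨x, hx, hxy⟩ := y.2
        exact ⟨⟨x, hx⟩, Subtype.ext hxy⟩
      obtain ⟨σ, hσ⟩ := Module.projective_lifting_property q LinearMap.id hqsurj
      -- kernel of q
      set N' : Submodule R V := Submodule.map N.subtype (LinearMap.ker q) with hN'
      have hkerfg : (LinearMap.ker q).FG := by
        have hfin : Module.Finite R ↥N := Module.Finite.iff_fg.mpr hfg
        have hker : LinearMap.ker q = LinearMap.range (LinearMap.id - σ ∘ₗ q) := by
          apply le_antisymm
          · intro x hx
            refine ⟨x, ?_⟩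
            simp only [LinearMap.sub_apply, LinearMap.id_apply, LinearMap.comp_apply]
            rw [LinearMap.mem_ker.mp hx]
            simp
          · rintro _ ⟨x, rfl⟩
            simp only [LinearMap.mem_ker, LinearMap.sub_apply, LinearMap.id_apply,
              LinearMap.comp_apply, map_sub]
            have : q (σ (q x)) = q x := by
              have := congrArg (fun g => g (q x)) hσ
              simpa using this
            rw [this, sub_self]
        rw [hker]
        exact Module.Finite.iff_fg.mp (Module.Finite.range _)
      have hN'fg : N'.FG := hkerfg.map _
      -- rank bound
      have hN'span : Submodule.span K (N' : Set V) ≤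
          Submodule.span K (N : Set V) ⊓ LinearMap.ker f := by
        rw [Submodule.span_le]
        rintro _ ⟨x, hx, rfl⟩
        refine ⟨Submodule.subset_span x.2, ?_⟩
        have hqx : q x = 0 := hx
        have : fR ↑x = 0 := by
          have := congrArg (Subtype.val) hqx
          exact this
        simpa [hfR] using this
      have hlt : Submodule.span K (N : Set V) ⊓ LinearMap.ker f <
          Submodule.span K (N : Set V) := by
        rw [lt_iff_le_and_ne]
        refine ⟨inf_le_left, ?_⟩
        intro h
        have hvmem : v ∈ Submodule.span K (N : Set V) := Submodule.subset_span hv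
        rw [← h] at hvmem
        have : f v = 0 := hvmem.2
        rw [hfv] at this
        exact one_ne_zero this
      have hrank' : Module.finrank K (Submodule.span K (N' : Set V)) ≤ n := by
        have h1 : Module.finrank K (Submodule.span K (N' : Set V)) ≤
            Module.finrank K (Submodule.span K (N : Set V) ⊓ LinearMap.ker f : Submodule K V) :=
          Submodule.finrank_mono hN'span
        have h2 : Module.finrank K (Submodule.span K (N : Set V) ⊓ LinearMap.ker f :
            Submodule K V) < Module.finrank K (Submodule.span K (N : Set V)) :=
          Submodule.finrank_lt_finrank_of_lt hlt
        omega
      have hN'proj : Module.Projective R ↥N' := ih N' hN'fg hrank'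
      have hkerproj : Module.Projective R ↥(LinearMap.ker q) :=
        Module.Projective.of_equiv
          (Submodule.equivMapOfInjective N.subtype (Submodule.injective_subtype N)
            (LinearMap.ker q)).symm
      -- assemble
      set Φ : ↥N →ₗ[R] ↥(LinearMap.ker q) × ↥J :=
        LinearMap.prod
          (LinearMap.codRestrict (LinearMap.ker q) (LinearMap.id - σ ∘ₗ q)
            (fun x => by
              simp only [LinearMap.mem_ker, LinearMap.sub_apply, LinearMap.id_apply,
                LinearMap.comp_apply, map_sub]
              have : q (σ (q x)) = q x := by
                have := congrArg (fun g => g (q x)) hσ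
                simpa using this
              rw [this, sub_self]))
          q with hΦ
      set Ψ : ↥(LinearMap.ker q) × ↥J →ₗ[R] ↥N :=
        (LinearMap.ker q).subtype ∘ₗ LinearMap.fst R _ _ + σ ∘ₗ LinearMap.snd R _ _ with hΨ
      have hΨΦ : Ψ.comp Φ = LinearMap.id := by
        ext x
        simp [hΨ, hΦ, sub_add_cancel]
      exact Module.Projective.of_split Φ Ψ hΨΦ

theorem stmt1 (R : Type*) [CommRing R] [IsDomain R] (hR : IsPruferDomain R)
    (K : Type*) [Field K] [Algebra R K] [IsFractionRing R K]
    (V : Type*) [AddCommGroup V] [Module K V] [Module R V] [IsScalarTower R K V]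
    (M : Submodule R V) (hMfg : M.FG) (hMspan : Submodule.span K (M : Set V) = ⊤)
    (U : Submodule K V) :
    (U.restrictScalars R ⊓ M).FG := by
  classical
  set π : V →ₗ[R] V ⧸ U := (U.mkQ).restrictScalars R with hπ
  set N : Submodule R (V ⧸ U) := Submodule.map π M with hN
  have hNfg : N.FG := hMfg.map π
  have hNproj : Module.Projective R ↥N :=
    prufer_projective_of_fg hR (Module.finrank K (Submodule.span K (N : Set (V ⧸ U)))) N hNfg
      le_rfl
  have hmemN : ∀ x : ↥M, π ↑x ∈ N := fun x => Submodule.mem_map_of_mem x.2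
  set q : ↥M →ₗ[R] ↥N := LinearMap.codRestrict N (π ∘ₗ M.subtype) fun x => hmemN x with hq
  have hqsurj : Function.Surjective q := by
    intro y
    obtain ⟨x, hx, hxy⟩ := y.2
    exact ⟨⟨x, hx⟩, Subtype.ext hxy⟩
  obtain ⟨σ, hσ⟩ := Module.projective_lifting_property q LinearMap.id hqsurj
  have hkerfg : (LinearMap.ker q).FG := by
    have hfin : Module.Finite R ↥M := Module.Finite.iff_fg.mpr hMfg
    have hker : LinearMap.ker q = LinearMap.range (LinearMap.id - σ ∘ₗ q) := by
      apply le_antisymm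
      · intro x hx
        refine ⟨x, ?_⟩
        simp only [LinearMap.sub_apply, LinearMap.id_apply, LinearMap.comp_apply]
        rw [LinearMap.mem_ker.mp hx]
        simp
      · rintro _ ⟨x, rfl⟩
        simp only [LinearMap.mem_ker, LinearMap.sub_apply, LinearMap.id_apply,
          LinearMap.comp_apply, map_sub]
        have : q (σ (q x)) = q x := by
          have := congrArg (fun g => g (q x)) hσ
          simpa using this
        rw [this, sub_self]
    rw [hker]
    exact Module.Finite.iff_fg.mp (Module.Finite.range _)
  have hEq : U.restrictScalars R ⊓ M = Submodule.map M.subtype (LinearMap.ker q) := by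
    ext x
    constructor
    · rintro ⟨hxU, hxM⟩
      have hq0 : q ⟨x, hxM⟩ = 0 := by
        apply Subtype.ext
        rw [hq]
        simp only [LinearMap.codRestrict_apply, LinearMap.comp_apply,
          Submodule.coe_subtype, ZeroMemClass.coe_zero, hπ, LinearMap.coe_restrictScalars,
          Submodule.mkQ_apply]
        simpa [Submodule.Quotient.mk_eq_zero] using hxU
      exact ⟨⟨x, hxM⟩, LinearMap.mem_ker.mpr hq0, rfl⟩
    · rintro ⟨y, hy, rfl⟩
      refine ⟨?_, y.2⟩
      have : π ↑y = 0 := by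
        have := congrArg (Subtype.val) (LinearMap.mem_ker.mp hy)
        exact this
      show (y : V) ∈ U
      rw [hπ] at this
      simp only [LinearMap.coe_restrictScalars] at this
      rwa [← Submodule.Quotient.mk_eq_zero U, ← Submodule.mkQ_apply]
  rw [hEq]
  exact hkerfg.map _
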